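/- Let A = k[x]/(x²−hx−t) with the Frobenius structure above. Define Φ : A⊗A → A⊗A by Φ = (Δ − μΔ⊗η)∘(μ − μΔ⊗ε), i.e. Φ = Δ̃∘μ̃. Then the four-term sequence 0 → A →^Δ A⊗A →^Φ A⊗A →^μ A → 0 is a contractible chain complex, with contraction given by (id⊗ε) : A⊗A → A, (id⊗ηε) : A⊗A → A⊗A, and (id⊗η) : A → A⊗A; that is: Φ∘Δ = 0, μ∘Φ = 0, (id⊗ε)∘Δ = id_A, Δ∘(id⊗ε) + (id⊗ηε)∘Φ = id, Φ∘(id⊗ηε) + (id⊗η)∘μ = id, μ∘(id⊗η) = id_A. -/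

import Mathlib

open Polynomial TensorProduct

/-- The Frobenius algebra `C_{h,t} = k[x]/(x² - hx - t)`. -/
noncomputable abbrev Cht (k : Type) [CommRing k] (h t : k) : Type :=
  AdjoinRoot (X ^ 2 - C h * X - C t : k[X])

/-- The generator `x` of `C_{h,t}`. -/
noncomputable abbrev xg (k : Type) [CommRing k] (h t : k) : Cht k h t :=
  AdjoinRoot.root _

variable {k : Type} [CommRing k] (h t : k)

lemma monicP : (X ^ 2 - C h * X - C t : k[X]).Monic := by
  monicity!

lemma spanCht : Submodule.span k {(1 : Cht k h t), xg k h t} = ⊤ := by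
  rcases subsingleton_or_nontrivial k with hk | hk
  · have : Subsingleton (Cht k h t) := Module.subsingleton k _
    exact Subsingleton.elim _ _
  · rw [Submodule.eq_top_iff']
    intro a
    induction a using AdjoinRoot.induction_on with
    | ih p =>
      set f : k[X] := X ^ 2 - C h * X - C t with hf
      have hmk : AdjoinRoot.mk f p = AdjoinRoot.mk f (p %ₘ f) := by
        conv_lhs => rw [← modByMonic_add_div p f]
        simp [map_add, map_mul, AdjoinRoot.mk_self]
      have hdf : f.degree = 2 := by rw [hf]; compute_degree!
      have hdeg : (p %ₘ f).degree ≤ 1 := by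
        have := degree_modByMonic_lt p (monicP h t (k := k))
        rw [hdf] at this
        exact Order.le_of_lt_succ (by exact_mod_cast this)
      have hr := eq_X_add_C_of_degree_le_one hdeg
      rw [hmk, hr]
      simp only [map_add, map_mul, AdjoinRoot.mk_C, AdjoinRoot.mk_X]
      have h1 : (1 : Cht k h t) ∈ Submodule.span k {(1 : Cht k h t), xg k h t} :=
        Submodule.subset_span (by simp)
      have h2 : xg k h t ∈ Submodule.span k {(1 : Cht k h t), xg k h t} :=
        Submodule.subset_span (by simp)
      have hof : ∀ c : k, (AdjoinRoot.of f) c = c • (1 : Cht k h t) := by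
        intro c; rw [Algebra.smul_def, mul_one, AdjoinRoot.algebraMap_eq]
      rw [hof, hof]
      refine Submodule.add_mem _ ?_ (Submodule.smul_mem _ _ h1)
      have : ((p %ₘ f).coeff 1 • (1 : Cht k h t)) * AdjoinRoot.root f
          = (p %ₘ f).coeff 1 • xg k h t := by
        rw [smul_mul_assoc, one_mul]
      rw [this]
      exact Submodule.smul_mem _ _ h2

lemma extCht {M : Type} [AddCommGroup M] [Module k M]
    (f g : Cht k h t →ₗ[k] M) (h1 : f 1 = g 1) (hx : f (xg k h t) = g (xg k h t)) :
    f = g := by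
  apply LinearMap.ext_on (spanCht h t)
  rintro y (rfl | rfl) <;> assumption

lemma keyCht : xg k h t * xg k h t = h • xg k h t + t • (1 : Cht k h t) := by
  have h0 := AdjoinRoot.eval₂_root (X ^ 2 - C h * X - C t : k[X])
  simp only [eval₂_sub, eval₂_mul, eval₂_pow, eval₂_X, eval₂_C] at h0
  have hof : ∀ c : k, (AdjoinRoot.of (X ^ 2 - C h * X - C t : k[X])) c
      = c • (1 : Cht k h t) := by
    intro c; rw [Algebra.smul_def, mul_one, AdjoinRoot.algebraMap_eq]
  rw [hof, hof, smul_mul_assoc, one_mul] at h0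
  have hsq : xg k h t ^ 2 = xg k h t * xg k h t := sq _
  rw [hsq] at h0
  linear_combination h0

lemma extCht2 {M : Type} [AddCommGroup M] [Module k M]
    (f g : Cht k h t ⊗[k] Cht k h t →ₗ[k] M)
    (h11 : f (1 ⊗ₜ[k] 1) = g (1 ⊗ₜ[k] 1))
    (h1x : f (1 ⊗ₜ[k] xg k h t) = g (1 ⊗ₜ[k] xg k h t))
    (hx1 : f (xg k h t ⊗ₜ[k] 1) = g (xg k h t ⊗ₜ[k] 1))
    (hxx : f (xg k h t ⊗ₜ[k] xg k h t) = g (xg k h t ⊗ₜ[k] xg k h t)) :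
    f = g := by
  apply TensorProduct.ext
  apply extCht h t
  · apply extCht h t <;> simpa
  · apply extCht h t <;> simpa

set_option maxHeartbeats 2000000 in
/-- With `Φ = Δ̃∘μ̃`, the four-term sequence `0 → A →^Δ A⊗A →^Φ A⊗A →^μ A → 0` is a
contractible chain complex, with contraction `(id⊗ε)`, `(id⊗ηε)`, `(id⊗η)`. -/
theorem stmt6 (k : Type) [CommRing k] (h t : k)
    (Δ : Cht k h t →ₗ[k] Cht k h t ⊗[k] Cht k h t)
    (ε : Cht k h t →ₗ[k] k)
    (hΔ1 : Δ 1 = 1 ⊗ₜ[k] xg k h t + xg k h t ⊗ₜ[k] 1 - h • ((1 : Cht k h t) ⊗ₜ[k] 1))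
    (hΔx : Δ (xg k h t) = xg k h t ⊗ₜ[k] xg k h t + t • ((1 : Cht k h t) ⊗ₜ[k] 1))
    (hε1 : ε 1 = 0) (hεx : ε (xg k h t) = 1)
    -- the twisted coaction `Δ̃(a) = Δ(a) − μΔ(a) ⊗ 1`
    (Δt : Cht k h t →ₗ[k] Cht k h t ⊗[k] Cht k h t)
    (hΔt : ∀ a : Cht k h t,
      Δt a = Δ a - (LinearMap.mul' k (Cht k h t) (Δ a)) ⊗ₜ[k] 1)
    -- the twisted action `μ̃(a⊗b) = ab − ε(b)·μΔ(a)`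
    (μt : Cht k h t ⊗[k] Cht k h t →ₗ[k] Cht k h t)
    (hμt : ∀ a b : Cht k h t,
      μt (a ⊗ₜ[k] b) = a * b - ε b • (LinearMap.mul' k (Cht k h t) (Δ a)))
    -- `s₁ = id ⊗ η : A → A⊗A`
    (s₁ : Cht k h t →ₗ[k] Cht k h t ⊗[k] Cht k h t)
    (hs₁ : ∀ a : Cht k h t, s₁ a = a ⊗ₜ[k] 1)
    -- `s₂ = id ⊗ ε : A⊗A → A`
    (s₂ : Cht k h t ⊗[k] Cht k h t →ₗ[k] Cht k h t)
    (hs₂ : ∀ a b : Cht k h t, s₂ (a ⊗ₜ[k] b) = ε b • a)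
    -- `sₘ = id ⊗ ηε : A⊗A → A⊗A`
    (sₘ : Cht k h t ⊗[k] Cht k h t →ₗ[k] Cht k h t ⊗[k] Cht k h t)
    (hsₘ : ∀ a b : Cht k h t, sₘ (a ⊗ₜ[k] b) = ε b • (a ⊗ₜ[k] (1 : Cht k h t))) :
    (Δt.comp μt).comp Δ = 0 ∧
    (LinearMap.mul' k (Cht k h t)).comp (Δt.comp μt) = 0 ∧
    s₂.comp Δ = LinearMap.id ∧
    Δ.comp s₂ + sₘ.comp (Δt.comp μt) = LinearMap.id ∧
    (Δt.comp μt).comp sₘ + s₁.comp (LinearMap.mul' k (Cht k h t)) = LinearMap.id ∧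
    (LinearMap.mul' k (Cht k h t)).comp s₁ = LinearMap.id := by
  refine ⟨?_, ?_, ?_, ?_, ?_, ?_⟩
  · apply extCht h t <;>
      · simp only [LinearMap.comp_apply, LinearMap.zero_apply, LinearMap.id_apply,
          LinearMap.add_apply, map_add, map_sub, map_smul, map_zero, sub_self, zero_tmul,
          tmul_zero, add_zero, zero_add, sub_zero, hΔ1, hΔx, hε1, hεx, hΔt, hμt,
          hs₁, hs₂, hsₘ, LinearMap.mul'_apply, keyCht, one_mul, mul_one, tmul_smul,
          ← smul_tmul', add_tmul, tmul_add, sub_tmul, tmul_sub, one_smul, zero_smul,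
          smul_zero, smul_add, smul_sub]
        first
        | module
        | skip
  · apply extCht2 h t <;>
      · simp only [LinearMap.comp_apply, LinearMap.zero_apply, LinearMap.id_apply,
          LinearMap.add_apply, map_add, map_sub, map_smul, map_zero, sub_self, zero_tmul,
          tmul_zero, add_zero, zero_add, sub_zero, hΔ1, hΔx, hε1, hεx, hΔt, hμt,
          hs₁, hs₂, hsₘ, LinearMap.mul'_apply, keyCht, one_mul, mul_one, tmul_smul,
          ← smul_tmul', add_tmul, tmul_add, sub_tmul, tmul_sub, one_smul, zero_smul,
          smul_zero, smul_add, smul_sub]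
        first
        | module
        | skip
  · apply extCht h t <;>
      · simp only [LinearMap.comp_apply, LinearMap.zero_apply, LinearMap.id_apply,
          LinearMap.add_apply, map_add, map_sub, map_smul, map_zero, sub_self, zero_tmul,
          tmul_zero, add_zero, zero_add, sub_zero, hΔ1, hΔx, hε1, hεx, hΔt, hμt,
          hs₁, hs₂, hsₘ, LinearMap.mul'_apply, keyCht, one_mul, mul_one, tmul_smul,
          ← smul_tmul', add_tmul, tmul_add, sub_tmul, tmul_sub, one_smul, zero_smul,
          smul_zero, smul_add, smul_sub]
        first
        | module
        | skip
  · apply extCht2 h t <;>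
      · simp only [LinearMap.comp_apply, LinearMap.zero_apply, LinearMap.id_apply,
          LinearMap.add_apply, map_add, map_sub, map_smul, map_zero, sub_self, zero_tmul,
          tmul_zero, add_zero, zero_add, sub_zero, hΔ1, hΔx, hε1, hεx, hΔt, hμt,
          hs₁, hs₂, hsₘ, LinearMap.mul'_apply, keyCht, one_mul, mul_one, tmul_smul,
          ← smul_tmul', add_tmul, tmul_add, sub_tmul, tmul_sub, one_smul, zero_smul,
          smul_zero, smul_add, smul_sub]
        first
        | module
        | skip
  · apply extCht2 h t <;>
      · simp only [LinearMap.comp_apply, LinearMap.zero_apply, LinearMap.id_apply,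
          LinearMap.add_apply, map_add, map_sub, map_smul, map_zero, sub_self, zero_tmul,
          tmul_zero, add_zero, zero_add, sub_zero, hΔ1, hΔx, hε1, hεx, hΔt, hμt,
          hs₁, hs₂, hsₘ, LinearMap.mul'_apply, keyCht, one_mul, mul_one, tmul_smul,
          ← smul_tmul', add_tmul, tmul_add, sub_tmul, tmul_sub, one_smul, zero_smul,
          smul_zero, smul_add, smul_sub]
        first
        | module
        | skip
  · apply extCht h t <;>
      · simp only [LinearMap.comp_apply, LinearMap.zero_apply, LinearMap.id_apply,
          LinearMap.add_apply, map_add, map_sub, map_smul, map_zero, sub_self, zero_tmul,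
          tmul_zero, add_zero, zero_add, sub_zero, hΔ1, hΔx, hε1, hεx, hΔt, hμt,
          hs₁, hs₂, hsₘ, LinearMap.mul'_apply, keyCht, one_mul, mul_one, tmul_smul,
          ← smul_tmul', add_tmul, tmul_add, sub_tmul, tmul_sub, one_smul, zero_smul,
          smul_zero, smul_add, smul_sub]
        first
        | module
        | skip
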